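/- For every k ≥ 2, the stay-or-roll protocol is self-stabilizing on all 2 × k games: for every game with strategy spaces {1,2} × {1,...,k} that has at least one pure Nash equilibrium, from every state some pure Nash equilibrium is reachable with positive probability under synchronous stay-or-roll dynamics, and pure Nash equilibria are absorbing. -/
import Mathlib


open scoped Classical

/-- Player 1 is best-responding at `a` in a `2 × k` game. -/
def BR1 (k : ℕ) (u1 : Fin 2 × Fin k → ℝ) (a : Fin 2 × Fin k) : Prop :=
  ∀ α : Fin 2, u1 (α, a.2) ≤ u1 a

/-- Player 2 is best-responding at `a` in a `2 × k` game. -/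
def BR2 (k : ℕ) (u2 : Fin 2 × Fin k → ℝ) (a : Fin 2 × Fin k) : Prop :=
  ∀ β : Fin k, u2 (a.1, β) ≤ u2 a

/-- A pure Nash equilibrium: both players are best-responding. -/
def PNE (k : ℕ) (u1 u2 : Fin 2 × Fin k → ℝ) (a : Fin 2 × Fin k) : Prop :=
  BR1 k u1 a ∧ BR2 k u2 a

/-- Transition probability of synchronous stay-or-roll dynamics: each player keeps
its action if best-responding, else chooses uniformly at random. -/
noncomputable def ker (k : ℕ) (u1 u2 : Fin 2 × Fin k → ℝ)
    (a b : Fin 2 × Fin k) : ℝ :=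
  (if BR1 k u1 a then (if b.1 = a.1 then (1 : ℝ) else 0) else 1 / 2) *
  (if BR2 k u2 a then (if b.2 = a.2 then (1 : ℝ) else 0) else 1 / k)

/-- Distribution of the state at time `t` starting from `a0`. -/
noncomputable def evolve (k : ℕ) (u1 u2 : Fin 2 × Fin k → ℝ)
    (a0 : Fin 2 × Fin k) : ℕ → Fin 2 × Fin k → ℝ
  | 0 => fun b => if b = a0 then 1 else 0
  | t + 1 => fun b => ∑ a : Fin 2 × Fin k, evolve k u1 u2 a0 t a * ker k u1 u2 a b

lemma ker_nonneg (k : ℕ) (u1 u2 : Fin 2 × Fin k → ℝ) (a b : Fin 2 × Fin k) :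
    0 ≤ ker k u1 u2 a b := by
  unfold ker
  split_ifs <;> positivity

lemma ker_pos (k : ℕ) (hk : 0 < k) (u1 u2 : Fin 2 × Fin k → ℝ) (a b : Fin 2 × Fin k)
    (h1 : BR1 k u1 a → b.1 = a.1) (h2 : BR2 k u2 a → b.2 = a.2) :
    0 < ker k u1 u2 a b := by
  unfold ker
  have hk' : (0:ℝ) < (k:ℝ) := by exact_mod_cast hk
  split_ifs with hA hB hB hB hB <;> simp_all <;> positivity

lemma evolve_nonneg (k : ℕ) (u1 u2 : Fin 2 × Fin k → ℝ) (a0 : Fin 2 × Fin k) :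
    ∀ m b, 0 ≤ evolve k u1 u2 a0 m b := by
  intro m
  induction m with
  | zero => intro b; simp only [evolve]; split_ifs <;> norm_num
  | succ t ih =>
    intro b
    simp only [evolve]
    exact Finset.sum_nonneg fun a _ => mul_nonneg (ih a) (ker_nonneg k u1 u2 a b)

lemma evolve_succ_pos (k : ℕ) (u1 u2 : Fin 2 × Fin k → ℝ) (a0 : Fin 2 × Fin k)
    (m : ℕ) (b c : Fin 2 × Fin k) (hb : 0 < evolve k u1 u2 a0 m b)
    (hbc : 0 < ker k u1 u2 b c) : 0 < evolve k u1 u2 a0 (m + 1) c := by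
  simp only [evolve]
  apply Finset.sum_pos'
  · intro a _
    exact mul_nonneg (evolve_nonneg k u1 u2 a0 m a) (ker_nonneg k u1 u2 a c)
  · exact ⟨b, Finset.mem_univ b, mul_pos hb hbc⟩

lemma reach_of_chain (k : ℕ) (u1 u2 : Fin 2 × Fin k → ℝ) (a0 b : Fin 2 × Fin k)
    (h : Relation.ReflTransGen (fun x y => 0 < ker k u1 u2 x y) a0 b) :
    ∃ m, 0 < evolve k u1 u2 a0 m b := by
  induction h with
  | refl => exact ⟨0, by simp [evolve]⟩
  | tail _ hstep ih =>
    obtain ⟨m, hm⟩ := ih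
    exact ⟨m + 1, evolve_succ_pos k u1 u2 a0 m _ _ hm hstep⟩

lemma fin2_cases (x y z : Fin 2) (h : x ≠ y) : z = x ∨ z = y := by
  revert x y z; decide

/-- escape from a state where player 1 is best responding but 2 is not. -/
lemma escape (k : ℕ) (hk : 0 < k) (u1 u2 : Fin 2 × Fin k → ℝ)
    (p : Fin 2 × Fin k) (hp : PNE k u1 u2 p) (x : Fin 2) (y : Fin k)
    (h1 : BR1 k u1 (x, y)) (h2 : ¬ BR2 k u2 (x, y)) :
    ∃ q, PNE k u1 u2 q ∧
      Relation.ReflTransGen (fun s t => 0 < ker k u1 u2 s t) (x, y) q := by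
  by_cases hx : x = p.1
  · -- one step to p
    refine ⟨p, hp, Relation.ReflTransGen.single ?_⟩
    apply ker_pos k hk _ _ _ _ (fun _ => hx.symm) (fun hB => absurd hB h2)
  · -- pick best response column for player 2 in row x
    haveI : Nonempty (Fin k) := ⟨⟨0, hk⟩⟩
    obtain ⟨β', hβ'⟩ := Finite.exists_max (fun β : Fin k => u2 (x, β))
    have hstep1 : 0 < ker k u1 u2 (x, y) (x, β') :=
      ker_pos k hk _ _ _ _ (fun _ => rfl) (fun hB => absurd hB h2)
    have hbr2b : BR2 k u2 (x, β') := fun β => hβ' β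
    by_cases hbr1b : BR1 k u1 (x, β')
    · exact ⟨(x, β'), ⟨hbr1b, hbr2b⟩, Relation.ReflTransGen.single hstep1⟩
    · -- player 1 rolls to p.1
      have hstep2 : 0 < ker k u1 u2 (x, β') (p.1, β') :=
        ker_pos k hk _ _ _ _ (fun hB => absurd hB hbr1b) (fun _ => rfl)
      have hbr1c : BR1 k u1 (p.1, β') := by
        simp only [BR1, not_forall, not_le] at hbr1b
        obtain ⟨α, hα⟩ := hbr1b
        have hαx : α ≠ x := by
          intro h; rw [h] at hα; exact lt_irrefl _ hα
        have hαq : α = p.1 := by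
          rcases fin2_cases x p.1 α hx with h | h
          · exact absurd h hαx
          · exact h
        intro γ
        rcases fin2_cases x p.1 γ hx with h | h
        · rw [h]; exact le_of_lt (hαq ▸ hα)
        · rw [h]
      by_cases hbr2c : BR2 k u2 (p.1, β')
      · exact ⟨(p.1, β'), ⟨hbr1c, hbr2c⟩,
          Relation.ReflTransGen.head hstep1 (Relation.ReflTransGen.single hstep2)⟩
      · have hstep3 : 0 < ker k u1 u2 (p.1, β') (p.1, p.2) :=
          ker_pos k hk _ _ _ _ (fun _ => rfl) (fun hB => absurd hB hbr2c)
        exact ⟨p, hp, Relation.ReflTransGen.head hstep1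
          (Relation.ReflTransGen.head hstep2 (Relation.ReflTransGen.single hstep3))⟩

/-- For every `k ≥ 2`, the stay-or-roll protocol is self-stabilizing on all `2 × k`
games: for every such game with at least one pure Nash equilibrium, pure Nash
equilibria are absorbing, and from every state some pure Nash equilibrium is
reachable with positive probability under synchronous stay-or-roll dynamics. -/
theorem stmt16 (k : ℕ) (hk : 2 ≤ k) (u1 u2 : Fin 2 × Fin k → ℝ)
    (hpne : ∃ p, PNE k u1 u2 p) :
    (∀ p, PNE k u1 u2 p → ker k u1 u2 p p = 1) ∧
    (∀ a : Fin 2 × Fin k, ∃ (p : Fin 2 × Fin k) (m : ℕ),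
      PNE k u1 u2 p ∧ 0 < evolve k u1 u2 a m p) := by
  have hk0 : 0 < k := by omega
  obtain ⟨p, hp⟩ := hpne
  constructor
  · intro q hq
    simp [ker, hq.1, hq.2]
  · intro a
    suffices h : ∃ q, PNE k u1 u2 q ∧
        Relation.ReflTransGen (fun s t => 0 < ker k u1 u2 s t) a q by
      obtain ⟨q, hq, hr⟩ := h
      obtain ⟨m, hm⟩ := reach_of_chain k u1 u2 a q hr
      exact ⟨q, m, hq, hm⟩
    by_cases hb1 : BR1 k u1 a <;> by_cases hb2 : BR2 k u2 a
    · exact ⟨a, ⟨hb1, hb2⟩, Relation.ReflTransGen.refl⟩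
    · obtain ⟨q, hq, hr⟩ := escape k hk0 u1 u2 p hp a.1 a.2 hb1 hb2
      exact ⟨q, hq, hr⟩
    · -- player 1 rolls to argmax, player 2 stays
      obtain ⟨α', hα'⟩ := Finite.exists_max (fun α : Fin 2 => u1 (α, a.2))
      have hstep : 0 < ker k u1 u2 a (α', a.2) :=
        ker_pos k hk0 _ _ _ _ (fun hB => absurd hB hb1) (fun _ => rfl)
      have hbr1 : BR1 k u1 (α', a.2) := fun α => hα' α
      by_cases hbr2 : BR2 k u2 (α', a.2)
      · exact ⟨(α', a.2), ⟨hbr1, hbr2⟩, Relation.ReflTransGen.single hstep⟩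
      · obtain ⟨q, hq, hr⟩ := escape k hk0 u1 u2 p hp α' a.2 hbr1 hbr2
        exact ⟨q, hq, Relation.ReflTransGen.head hstep hr⟩
    · -- both roll, jump to p
      refine ⟨p, hp, Relation.ReflTransGen.single ?_⟩
      exact ker_pos k hk0 _ _ _ _ (fun hB => absurd hB hb1) (fun hB => absurd hB hb2)
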